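/- Let $E \to \Gamma$ be the prequantum circle bundle with connection form $\theta$ over a symplectic groupoid $\Gamma \rightrightarrows P$, with its induced groupoid structure $E \rightrightarrows P$. A bisection $K$ of $E$ is Legendrian (i.e., horizontal with respect to $\theta$) if and only if the left translation $l_K: E \to E$ is a contact diffeomorphism, i.e., $l_K^*\theta = \theta$. -/
import Mathlib


/-- Let `E → Γ` be the prequantum circle bundle with
connection form `θ` over a symplectic groupoid `Γ ⇉ P`, with its induced
groupoid structure `E ⇉ P`.  A bisection `K` of `E` is Legendrian (i.e.
horizontal with respect to `θ`) if and only if the left translation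
`l_K : E → E` is a contact diffeomorphism, i.e. `l_K^* θ = θ`.

Pointwise model: `VE` and `VP` are the (trivialised) tangent spaces of `E`
and `P`; `θ x : VE → ℝ` is the connection form at `x ∈ E`; the bisection is
recorded by its section `K : P → E` of the source map `α`, with differential
`dK u : VP → VE` (so the tangent spaces to the bisection are the images of
`dK`); `lK` is the left translation `x ↦ K(α(x))·x` with differential
`dl x : VE → VE`; `hgraph` records that the graph of the multiplication of
`E` annihilates the one-form `(θ, θ, -θ)` (applied to the curve
`(K(α(x(t))), x(t), l_K(x(t)))` in the graph); and `α` is a surjective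
submersion. -/
theorem legendrian_iff_contact
    {E P VE VP : Type*}
    [AddCommGroup VE] [Module ℝ VE] [AddCommGroup VP] [Module ℝ VP]
    (θ : E → VE →ₗ[ℝ] ℝ)
    (α : E → P)
    (K : P → E)                 -- the bisection, as a section of α
    (hK : ∀ u, α (K u) = u)
    (dK : ∀ u : P, VP →ₗ[ℝ] VE)  -- differential of K
    (dα : ∀ x : E, VE →ₗ[ℝ] VP)  -- differential of α
    (lK : E → E)                 -- left translation by K, x ↦ K(α x)·x
    (dl : ∀ x : E, VE →ₗ[ℝ] VE)  -- differential of l_K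
    -- the graph of multiplication annihilates (θ, θ, -θ):
    (hgraph : ∀ (x : E) (v : VE),
      θ (K (α x)) (dK (α x) (dα x v)) + θ x v - θ (lK x) (dl x v) = 0)
    -- α is surjective and a submersion
    (hαsurj : Function.Surjective α)
    (hdαsurj : ∀ x : E, Function.Surjective (dα x)) :
    -- K is Legendrian (θ vanishes on the tangent spaces of K) iff
    -- l_K is a contact diffeomorphism (l_K^* θ = θ)
    ((∀ (u : P) (w : VP), θ (K u) (dK u w) = 0) ↔
      (∀ (x : E) (v : VE), θ (lK x) (dl x v) = θ x v)) := by
  constructor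
  · intro hL x v
    have h := hgraph x v
    rw [hL (α x) (dα x v)] at h
    linarith
  · intro hC u w
    obtain ⟨x, hx⟩ := hαsurj u
    obtain ⟨v, hv⟩ := hdαsurj x w
    have h := hgraph x v
    rw [hC x v] at h
    rw [← hx, ← hv]
    linarith
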